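/- For every x ∈ X there exists a unique y ∈ Y such that y ∈ Kᗮ and there exists z ∈ Z with Jx x + Jy y + Jz z = 0. (This is the linear system (1.6) of Theorem 2.4 defining the differential DH of the canonical solution map of a constant-rank elimination problem: it has exactly one solution y for each input direction x.) -/

import Mathlib

/-- The linear system (1.6) of Theorem 2.4: for every input direction `x`
there is exactly one `y ∈ Kᗮ` such that `Jx x + Jy y + Jz z = 0` for some `z`,
where `K = {y | ∃ z, Jy y + Jz z = 0}`. -/
theorem stmt3 {X Y Z W : Type*}
    [NormedAddCommGroup X] [InnerProductSpace ℝ X] [FiniteDimensional ℝ X]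
    [NormedAddCommGroup Y] [InnerProductSpace ℝ Y] [FiniteDimensional ℝ Y]
    [NormedAddCommGroup Z] [InnerProductSpace ℝ Z] [FiniteDimensional ℝ Z]
    [NormedAddCommGroup W] [InnerProductSpace ℝ W] [FiniteDimensional ℝ W]
    (Jx : X →ₗ[ℝ] W) (Jy : Y →ₗ[ℝ] W) (Jz : Z →ₗ[ℝ] W)
    (hfeas : LinearMap.range Jx ≤ LinearMap.range Jy ⊔ LinearMap.range Jz)
    (K : Submodule ℝ Y)
    (hK : K = (LinearMap.ker (Jy.coprod Jz)).map (LinearMap.fst ℝ Y Z)) :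
    ∀ x : X, ∃! y : Y, y ∈ Kᗮ ∧ ∃ z : Z, Jx x + Jy y + Jz z = 0 := by
  have hmem : ∀ y : Y, y ∈ K ↔ ∃ z : Z, Jy y + Jz z = 0 := by
    intro y
    rw [hK]
    constructor
    · rintro ⟨⟨y', z⟩, hp, rfl⟩
      exact ⟨z, hp⟩
    · rintro ⟨z, hz⟩
      exact ⟨(y, z), hz, rfl⟩
  intro x
  -- existence of some solution (y0, z0)
  obtain ⟨wy, ⟨y0, rfl⟩, wz, ⟨z0, rfl⟩, hsum⟩ :=
    Submodule.mem_sup.mp (hfeas (LinearMap.mem_range_self Jx x))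
  -- Jx x = Jy y0 + Jz z0
  -- decompose -y0 into K and Kᗮ parts
  set k := K.orthogonalProjectionOnto (-y0) with hk
  set y := (-y0) - (k : Y) with hy
  have hyK : y ∈ Kᗮ := by
    have := K.sub_starProjection_mem_orthogonal (-y0)
    rwa [Submodule.starProjection_apply] at this
  obtain ⟨zk, hzk⟩ := (hmem (k : Y)).mp k.2
  refine ⟨y, ⟨hyK, ⟨-z0 - zk, ?_⟩⟩, ?_⟩
  · have : Jy y = Jy (-y0) - Jy k := by simp [hy]
    rw [this]
    simp only [map_neg, map_sub]
    rw [← hsum]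
    abel_nf
    linear_combination (norm := module) -hzk
  · rintro y' ⟨hy'K, z', hz'⟩
    have hdiff : y' - y ∈ K := by
      rw [hmem]
      refine ⟨z' - (-z0 - zk), ?_⟩
      have h1 : Jx x + Jy y + Jz (-z0 - zk) = 0 := by
        have : Jy y = Jy (-y0) - Jy k := by simp [hy]
        rw [this]
        simp only [map_neg, map_sub]
        rw [← hsum]
        linear_combination (norm := module) -hzk
      have h2 : Jy (y' - y) + Jz (z' - (-z0 - zk)) =
          (Jx x + Jy y' + Jz z') - (Jx x + Jy y + Jz (-z0 - zk)) := by
        simp only [map_sub]; abel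
      rw [h2, hz', h1, sub_zero]
    have : y' - y ∈ Kᗮ := Kᗮ.sub_mem hy'K hyK
    have h0 : y' - y = 0 := by
      have := (Submodule.mem_inf.mpr ⟨hdiff, this⟩)
      rwa [Submodule.inf_orthogonal_eq_bot K, Submodule.mem_bot] at this
    exact sub_eq_zero.mp h0
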